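/- Suppose H = H_1 ⊕ H_2 ⊕ ⋯ ⊕ H_l is an internal orthogonal direct sum of nonzero subspaces such that every a'_i lies in some H_k and every b_i lies in some H_k. Then for each k, the vectors {b_i : b_i ∈ H_k} form an orthonormal basis of H_k (and likewise for the a'_j), and η(𝒜',ℬ) = max_{1≤k≤l} η(𝒜'|_{H_k}, ℬ|_{H_k}), where η(𝒜'|_{H_k}, ℬ|_{H_k}) is the state-independent disturbance of the projective measurements on H_k given by those basis vectors a'_j and b_i that lie in H_k. -/

import Mathlib

open scoped ComplexInnerProductSpace

noncomputable section

variable {H : Type*} [NormedAddCommGroup H] [InnerProductSpace ℂ H] [FiniteDimensional ℂ H]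
variable {ι ι' : Type*} [Fintype ι] [Fintype ι']

/-- The rank-one projector `|v⟩⟨v|`. -/
def ketbra (v : H) : H →ₗ[ℂ] H where
  toFun x := ⟪v, x⟫ • v
  map_add' x y := by simp [inner_add_right, add_smul]
  map_smul' c x := by simp [inner_smul_right, mul_smul]

/-- A density operator: self-adjoint, positive semidefinite, trace one. -/
def IsDensity (ρ : H →ₗ[ℂ] H) : Prop :=
  LinearMap.IsSymmetric ρ ∧ (∀ x : H, 0 ≤ (⟪x, ρ x⟫).re) ∧
    LinearMap.trace ℂ H ρ = 1

/-- The state-dependent error `ε_ρ(𝒜,𝒜')`. -/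
def sdError (a a' : ι → H) (ρ : H →ₗ[ℂ] H) : ℝ :=
  ⨆ i : ι, ‖LinearMap.trace ℂ H (ρ ∘ₗ (ketbra (a i) - ketbra (a' i)))‖

/-- The state-independent error `ε(𝒜,𝒜')`. -/
def siError (a a' : ι → H) : ℝ :=
  ⨆ ρ : {ρ : H →ₗ[ℂ] H // IsDensity ρ}, sdError a a' ρ.1

/-- The operator `|b_i⟩⟨b_i| − Σ_j |⟨a'_j, b_i⟩|² |a'_j⟩⟨a'_j|`. -/
def distOp (a' : ι' → H) (b : ι → H) (i : ι) : H →ₗ[ℂ] H :=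
  ketbra (b i) - ∑ j : ι', (‖⟪a' j, b i⟫‖ ^ 2 : ℂ) • ketbra (a' j)

/-- The state-dependent disturbance `η_ρ(𝒜',ℬ)`. -/
def sdDist (a' : ι' → H) (b : ι → H) (ρ : H →ₗ[ℂ] H) : ℝ :=
  ⨆ i : ι, ‖LinearMap.trace ℂ H (ρ ∘ₗ distOp a' b i)‖

/-- The state-independent disturbance `η(𝒜',ℬ)`. -/
def siDist (a' : ι' → H) (b : ι → H) : ℝ :=
  ⨆ ρ : {ρ : H →ₗ[ℂ] H // IsDensity ρ}, sdDist a' b ρ.1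

/-- The state-independent overall error `Δ(𝒜,𝒜',ℬ)`. -/
def siOverall (a a' b : ι → H) : ℝ :=
  ⨆ ρ : {ρ : H →ₗ[ℂ] H // IsDensity ρ}, (sdError a a' ρ.1 + sdDist a' b ρ.1)

namespace Red

open Submodule

lemma ketbra_apply (v x : H) : ketbra v x = ⟪v, x⟫ • v := rfl

lemma trace_eq_sum_inner (e : OrthonormalBasis ι ℂ H) (T : H →ₗ[ℂ] H) :
    LinearMap.trace ℂ H T = ∑ i, ⟪e i, T (e i)⟫ := by
  classical
  rw [LinearMap.trace_eq_matrix_trace ℂ e.toBasis T, Matrix.trace]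
  simp [Matrix.diag, LinearMap.toMatrix_apply, OrthonormalBasis.coe_toBasis_repr_apply,
    OrthonormalBasis.repr_apply_apply, OrthonormalBasis.coe_toBasis]

lemma trace_comp_ketbra (ρ : H →ₗ[ℂ] H) (v : H) :
    LinearMap.trace ℂ H (ρ ∘ₗ ketbra v) = ⟪v, ρ v⟫ := by
  rw [trace_eq_sum_inner (stdOrthonormalBasis ℂ H)]
  simp only [LinearMap.comp_apply, ketbra_apply, map_smul, inner_smul_right]
  exact (stdOrthonormalBasis ℂ H).sum_inner_mul_inner v (ρ v)

lemma trace_ketbra (v : H) : LinearMap.trace ℂ H (ketbra v) = ⟪v, v⟫ := by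
  have := trace_comp_ketbra (LinearMap.id (R := ℂ) (M := H)) v
  simpa using this

lemma trace_comp_distOp (ρ : H →ₗ[ℂ] H) (a' : ι' → H) (b : ι → H) (i : ι) :
    LinearMap.trace ℂ H (ρ ∘ₗ distOp a' b i)
      = ⟪b i, ρ (b i)⟫ - ∑ j : ι', (‖⟪a' j, b i⟫‖ ^ 2 : ℂ) * ⟪a' j, ρ (a' j)⟫ := by
  have : ρ ∘ₗ distOp a' b i
      = ρ ∘ₗ ketbra (b i) - ∑ j : ι', (‖⟪a' j, b i⟫‖ ^ 2 : ℂ) • (ρ ∘ₗ ketbra (a' j)) := by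
    unfold distOp
    ext x
    simp [LinearMap.sub_apply, LinearMap.sum_apply, LinearMap.smul_apply, map_sub, map_sum,
      map_smul]
  rw [this, map_sub, map_sum]
  simp only [map_smul, trace_comp_ketbra, smul_eq_mul]

lemma isDensity_ketbra (v : H) (hv : ‖v‖ = 1) : IsDensity (ketbra v) := by
  refine ⟨?_, ?_, ?_⟩
  · intro x y
    simp only [ketbra_apply, inner_smul_left, inner_smul_right]
    rw [← inner_conj_symm v x, Complex.conj_conj]
    ring
  · intro x
    simp only [ketbra_apply, inner_smul_right]
    rw [← inner_conj_symm x v, Complex.mul_conj]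
    simpa using Complex.normSq_nonneg _
  · rw [trace_ketbra, inner_self_eq_norm_sq_to_K, hv]
    norm_num

lemma density_inner_re {ρ : H →ₗ[ℂ] H} (hρ : IsDensity ρ) (x : H) :
    ⟪x, ρ x⟫ = ((⟪x, ρ x⟫).re : ℂ) := by
  refine (Complex.conj_eq_iff_re.mp ?_).symm
  exact (inner_conj_symm (ρ x) x).trans (hρ.1 x x)

lemma density_diag_le_one {ρ : H →ₗ[ℂ] H} (hρ : IsDensity ρ) (e : OrthonormalBasis ι ℂ H)
    (i : ι) : (⟪e i, ρ (e i)⟫).re ≤ 1 := by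
  have h := trace_eq_sum_inner e ρ
  rw [hρ.2.2] at h
  have hre : ∑ j : ι, (⟪e j, ρ (e j)⟫).re = (1 : ℝ) := by
    have := congrArg Complex.re h.symm
    simpa [Complex.re_sum] using this
  rw [← hre]
  exact Finset.single_le_sum (fun j _ => hρ.2.1 (e j)) (Finset.mem_univ i)

lemma sum_normsq_inner (b : OrthonormalBasis ι ℂ H) (x : H) (hx : ‖x‖ = 1) :
    ∑ j : ι, ‖⟪b j, x⟫‖ ^ 2 = 1 := by
  have h := b.sum_inner_mul_inner x x
  rw [inner_self_eq_norm_sq_to_K, hx] at h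
  have : ∀ j, ⟪x, b j⟫ * ⟪b j, x⟫ = ((‖⟪b j, x⟫‖ ^ 2 : ℝ) : ℂ) := by
    intro j
    rw [← inner_conj_symm x (b j), RCLike.conj_mul]
    norm_num
  rw [Finset.sum_congr rfl (fun j _ => this j), ← Complex.ofReal_sum] at h
  norm_num at h
  exact_mod_cast h

lemma onb_restrict {d l : ℕ} (B : OrthonormalBasis (Fin d) ℂ H) (V : Fin l → Submodule ℂ H)
    (horth : ∀ k k', k ≠ k' → ∀ x ∈ V k, ∀ y ∈ V k', ⟪x, y⟫ = 0)
    (κ : Fin d → Fin l) (hmem : ∀ j, B j ∈ V (κ j)) (k : Fin l) :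
    ∃ B' : OrthonormalBasis {j : Fin d // κ j = k} ℂ (V k), ∀ j, (B' j : H) = B j.1 := by
  classical
  set f : {j : Fin d // κ j = k} → V k :=
    fun j => ⟨B j.1, by have := hmem j.1; rwa [j.2] at this⟩ with hf
  have hon : Orthonormal ℂ f := by
    rw [orthonormal_iff_ite]
    intro i j
    have hcoe : (⟪f i, f j⟫ : ℂ) = ⟪B i.1, B j.1⟫ := rfl
    rw [hcoe, orthonormal_iff_ite.mp B.orthonormal]
    simp [Subtype.ext_iff]
  have horthbot : (Submodule.span ℂ (Set.range f))ᗮ = ⊥ := by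
    rw [Submodule.eq_bot_iff]
    intro y hy
    have hcoord : ∀ j : Fin d, ⟪B j, (y : H)⟫ = 0 := by
      intro j
      by_cases hj : κ j = k
      · have hmemspan : f ⟨j, hj⟩ ∈ Submodule.span ℂ (Set.range f) :=
          Submodule.subset_span ⟨⟨j, hj⟩, rfl⟩
        have h0 := (Submodule.mem_orthogonal _ y).mp hy _ hmemspan
        rw [Submodule.coe_inner] at h0
        exact h0
      · exact horth (κ j) k hj (B j) (hmem j) (y : H) y.2
    have hzero : (y : H) = 0 := by
      have h0 := B.sum_repr' (y : H)
      rw [Finset.sum_congr rfl (fun j _ => by rw [hcoord j, zero_smul])] at h0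
      simpa using h0.symm
    exact Subtype.ext hzero
  have hspan : ⊤ ≤ Submodule.span ℂ (Set.range f) :=
    (Submodule.orthogonal_eq_bot_iff.mp horthbot).ge
  exact ⟨OrthonormalBasis.mk hon hspan, fun j => by rw [OrthonormalBasis.coe_mk]⟩

lemma onb_index_nonempty {n : Type*} [Fintype n] (K : Submodule ℂ H) (hK : K ≠ ⊥)
    (B : OrthonormalBasis n ℂ K) : Nonempty n := by
  haveI : Nontrivial K := Submodule.nontrivial_iff_ne_bot.mpr hK
  have h1 : 0 < Module.finrank ℂ K := Module.finrank_pos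
  rw [Module.finrank_eq_card_basis B.toBasis] at h1
  exact Fintype.card_pos_iff.mp h1

lemma diag_norm_le_one {ρ : H →ₗ[ℂ] H} (hρ : IsDensity ρ) (e : OrthonormalBasis ι ℂ H) (i : ι) :
    ‖⟪e i, ρ (e i)⟫‖ ≤ 1 := by
  rw [density_inner_re hρ (e i), Complex.norm_real, Real.norm_eq_abs, abs_of_nonneg (hρ.2.1 _)]
  exact density_diag_le_one hρ e i

lemma norm_trace_comp_distOp_le {ρ : H →ₗ[ℂ] H} (hρ : IsDensity ρ)
    (a' : OrthonormalBasis ι' ℂ H) (b : OrthonormalBasis ι ℂ H) (i : ι) :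
    ‖LinearMap.trace ℂ H (ρ ∘ₗ distOp ⇑a' ⇑b i)‖ ≤ 2 := by
  rw [trace_comp_distOp]
  have h1 : ‖⟪b i, ρ (b i)⟫‖ ≤ 1 := diag_norm_le_one hρ b i
  have h2 : ‖∑ j : ι', (‖⟪a' j, b i⟫‖ ^ 2 : ℂ) * ⟪a' j, ρ (a' j)⟫‖ ≤ 1 := by
    calc ‖∑ j : ι', (‖⟪a' j, b i⟫‖ ^ 2 : ℂ) * ⟪a' j, ρ (a' j)⟫‖
        ≤ ∑ j : ι', ‖(‖⟪a' j, b i⟫‖ ^ 2 : ℂ) * ⟪a' j, ρ (a' j)⟫‖ := norm_sum_le _ _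
      _ ≤ ∑ j : ι', ‖⟪a' j, b i⟫‖ ^ 2 := by
          refine Finset.sum_le_sum fun j _ => ?_
          calc ‖(‖⟪a' j, b i⟫‖ ^ 2 : ℂ) * ⟪a' j, ρ (a' j)⟫‖
              = ‖⟪a' j, b i⟫‖ ^ 2 * ‖⟪a' j, ρ (a' j)⟫‖ := by
                rw [norm_mul, norm_pow, Complex.norm_real, norm_norm]
            _ ≤ ‖⟪a' j, b i⟫‖ ^ 2 * 1 :=
                mul_le_mul_of_nonneg_left (diag_norm_le_one hρ a' j) (by positivity)
            _ = ‖⟪a' j, b i⟫‖ ^ 2 := mul_one _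
      _ = 1 := sum_normsq_inner a' (b i) (b.orthonormal.1 i)
  calc ‖⟪b i, ρ (b i)⟫ - ∑ j : ι', (‖⟪a' j, b i⟫‖ ^ 2 : ℂ) * ⟪a' j, ρ (a' j)⟫‖
      ≤ ‖⟪b i, ρ (b i)⟫‖ + ‖∑ j : ι', (‖⟪a' j, b i⟫‖ ^ 2 : ℂ) * ⟪a' j, ρ (a' j)⟫‖ :=
        norm_sub_le _ _
    _ ≤ 2 := by linarith

lemma sdDist_nonneg (a' : ι' → H) (b : ι → H) (ρ : H →ₗ[ℂ] H) : 0 ≤ sdDist a' b ρ :=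
  Real.iSup_nonneg fun _ => norm_nonneg _

lemma siDist_nonneg (a' : ι' → H) (b : ι → H) : 0 ≤ siDist a' b :=
  Real.iSup_nonneg fun ρ => sdDist_nonneg a' b ρ.1

lemma sdDist_le_two {ρ : H →ₗ[ℂ] H} (hρ : IsDensity ρ)
    (a' : OrthonormalBasis ι' ℂ H) (b : OrthonormalBasis ι ℂ H) : sdDist ⇑a' ⇑b ρ ≤ 2 :=
  Real.iSup_le (fun i => norm_trace_comp_distOp_le hρ a' b i) (by norm_num)

lemma siDist_le_two (a' : OrthonormalBasis ι' ℂ H) (b : OrthonormalBasis ι ℂ H) :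
    siDist ⇑a' ⇑b ≤ 2 :=
  Real.iSup_le (fun ρ => sdDist_le_two ρ.2 a' b) (by norm_num)

lemma trace_transfer {d l : ℕ} (a' b : OrthonormalBasis (Fin d) ℂ H)
    (V : Fin l → Submodule ℂ H)
    (horth : ∀ k k', k ≠ k' → ∀ x ∈ V k, ∀ y ∈ V k', ⟪x, y⟫ = 0)
    (κ μ : Fin d → Fin l)
    (ha' : ∀ j, a' j ∈ V (κ j)) (hb : ∀ i, b i ∈ V (μ i)) (k : Fin l)
    (A : {j : Fin d // κ j = k} → V k) (hA : ∀ j, ((A j : H)) = a' j.1)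
    (Bf : {i : Fin d // μ i = k} → V k) (hBf : ∀ i, ((Bf i : H)) = b i.1)
    (ρ : H →ₗ[ℂ] H) (σ : (V k) →ₗ[ℂ] (V k))
    (hmatch : ∀ v : V k, ⟪v, σ v⟫ = ⟪(v : H), ρ (v : H)⟫)
    (i : {i : Fin d // μ i = k}) :
    LinearMap.trace ℂ (V k) (σ ∘ₗ distOp A Bf i)
      = LinearMap.trace ℂ H (ρ ∘ₗ distOp ⇑a' ⇑b i.1) := by
  classical
  rw [trace_comp_distOp, trace_comp_distOp]
  have hbi : (⟪Bf i, σ (Bf i)⟫ : ℂ) = ⟪b i.1, ρ (b i.1)⟫ := by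
    rw [hmatch (Bf i), hBf i]
  have hinner : ∀ j : {j : Fin d // κ j = k}, (⟪A j, Bf i⟫ : ℂ) = ⟪a' j.1, b i.1⟫ := by
    intro j; rw [Submodule.coe_inner, hA j, hBf i]
  have haj : ∀ j : {j : Fin d // κ j = k}, (⟪A j, σ (A j)⟫ : ℂ) = ⟪a' j.1, ρ (a' j.1)⟫ := by
    intro j; rw [hmatch (A j), hA j]
  have hzero : ∀ j : Fin d, κ j ≠ k →
      (‖⟪a' j, b i.1⟫‖ ^ 2 : ℂ) * ⟪a' j, ρ (a' j)⟫ = 0 := by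
    intro j hj
    have h0 : (⟪a' j, b i.1⟫ : ℂ) = 0 :=
      horth (κ j) (μ i.1) (by rw [i.2]; exact hj) (a' j) (ha' j) (b i.1) (hb i.1)
    rw [h0]
    simp
  have hsum : ∑ j : Fin d, (‖⟪a' j, b i.1⟫‖ ^ 2 : ℂ) * ⟪a' j, ρ (a' j)⟫
      = ∑ j : {j : Fin d // κ j = k}, (‖⟪A j, Bf i⟫‖ ^ 2 : ℂ) * ⟪A j, σ (A j)⟫ := by
    calc ∑ j : Fin d, (‖⟪a' j, b i.1⟫‖ ^ 2 : ℂ) * ⟪a' j, ρ (a' j)⟫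
        = ∑ j ∈ Finset.univ.filter (fun j => κ j = k),
            (‖⟪a' j, b i.1⟫‖ ^ 2 : ℂ) * ⟪a' j, ρ (a' j)⟫ :=
          (Finset.sum_filter_of_ne (fun x _ hx => by
            by_contra hne; exact hx (hzero x hne))).symm
      _ = ∑ j : {j : Fin d // κ j = k}, (‖⟪a' j.1, b i.1⟫‖ ^ 2 : ℂ) * ⟪a' j.1, ρ (a' j.1)⟫ :=
          Finset.sum_subtype _ (by simp) _
      _ = ∑ j : {j : Fin d // κ j = k}, (‖⟪A j, Bf i⟫‖ ^ 2 : ℂ) * ⟪A j, σ (A j)⟫ :=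
          Finset.sum_congr rfl (fun j _ => by rw [hinner j, haj j])
  rw [hbi, ← hsum]

lemma siDist_reduce {d l : ℕ} (hd : 2 ≤ d) (hl : 1 ≤ l)
    (a' b : OrthonormalBasis (Fin d) ℂ H)
    (V : Fin l → Submodule ℂ H) (hV : ∀ k, V k ≠ ⊥)
    (horth : ∀ k k', k ≠ k' → ∀ x ∈ V k, ∀ y ∈ V k', ⟪x, y⟫ = 0)
    (κ μ : Fin d → Fin l)
    (ha' : ∀ j, a' j ∈ V (κ j)) (hb : ∀ i, b i ∈ V (μ i))
    (A : ∀ k, {j : Fin d // κ j = k} → V k) (hA : ∀ k j, ((A k j : H)) = a' j.1)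
    (Bf : ∀ k, {i : Fin d // μ i = k} → V k) (hBf : ∀ k i, ((Bf k i : H)) = b i.1) :
    siDist ⇑a' ⇑b = ⨆ k : Fin l, siDist (A k) (Bf k) := by
  classical
  choose B' hB' using fun k => onb_restrict a' V horth κ ha' k
  choose B hB using fun k => onb_restrict b V horth μ hb k
  have hAB' : ∀ k, ⇑(B' k) = A k := fun k =>
    funext fun j => Subtype.ext (by rw [hB' k j, ← hA k j])
  have hBB : ∀ k, ⇑(B k) = Bf k := fun k =>
    funext fun i => Subtype.ext (by rw [hB k i, ← hBf k i])
  have hRHSnn : (0 : ℝ) ≤ ⨆ k : Fin l, siDist (A k) (Bf k) :=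
    Real.iSup_nonneg fun k => siDist_nonneg _ _
  have hbddk : ∀ k : Fin l, BddAbove (Set.range
      fun σs : {σ : (V k) →ₗ[ℂ] (V k) // IsDensity σ} => sdDist (A k) (Bf k) σs.1) := by
    intro k
    refine ⟨2, ?_⟩
    rintro x ⟨σs, rfl⟩
    rw [← hAB' k, ← hBB k]
    exact sdDist_le_two σs.2 (B' k) (B k)
  have hbddH : BddAbove (Set.range
      fun ρs : {ρ : H →ₗ[ℂ] H // IsDensity ρ} => sdDist ⇑a' ⇑b ρs.1) :=
    ⟨2, by rintro x ⟨ρs, rfl⟩; exact sdDist_le_two ρs.2 a' b⟩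
  refine le_antisymm ?_ ?_
  · -- LHS ≤ RHS
    unfold siDist sdDist
    refine Real.iSup_le (fun ρs => ?_) hRHSnn
    refine Real.iSup_le (fun i => ?_) hRHSnn
    set k := μ i with hk
    set σ' : (V k) →ₗ[ℂ] (V k) :=
      (orthogonalProjection (V k)).toLinearMap ∘ₗ ρs.1 ∘ₗ (V k).subtype with hσ'def
    have hmatch : ∀ v : V k, ⟪v, σ' v⟫ = ⟪(v : H), ρs.1 (v : H)⟫ := fun v =>
      inner_orthogonalProjection_eq_of_mem_left (K := V k) v _
    have hsym : σ'.IsSymmetric := by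
      intro x y
      calc ⟪σ' x, y⟫ = ⟪ρs.1 (x : H), (y : H)⟫ :=
            inner_orthogonalProjection_eq_of_mem_right (K := V k) y (ρs.1 (x : H))
        _ = ⟪(x : H), ρs.1 (y : H)⟫ := ρs.2.1 _ _
        _ = ⟪x, σ' y⟫ := (inner_orthogonalProjection_eq_of_mem_left (K := V k) x _).symm
    set sA : ℝ := ∑ j : {j : Fin d // κ j = k}, (⟪a' j.1, ρs.1 (a' j.1)⟫).re with hsA
    set sB : ℝ := ∑ m : {m : Fin d // μ m = k}, (⟪b m.1, ρs.1 (b m.1)⟫).re with hsB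
    have htrA : LinearMap.trace ℂ (V k) σ' = ((sA : ℝ) : ℂ) := by
      rw [trace_eq_sum_inner (B' k), hsA, Complex.ofReal_sum]
      refine Finset.sum_congr rfl fun j _ => ?_
      rw [hmatch (B' k j), hB' k j]
      exact density_inner_re ρs.2 _
    have htrB : LinearMap.trace ℂ (V k) σ' = ((sB : ℝ) : ℂ) := by
      rw [trace_eq_sum_inner (B k), hsB, Complex.ofReal_sum]
      refine Finset.sum_congr rfl fun m _ => ?_
      rw [hmatch (B k m), hB k m]
      exact density_inner_re ρs.2 _
    have hsAB : sA = sB := by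
      have := htrA.symm.trans htrB
      exact_mod_cast this
    have hsBnn : 0 ≤ sB :=
      Finset.sum_nonneg fun m _ => ρs.2.2.1 _
    have hsum_all : ∑ m : Fin d, (⟪b m, ρs.1 (b m)⟫).re = 1 := by
      have h := trace_eq_sum_inner b ρs.1
      rw [ρs.2.2.2] at h
      have := congrArg Complex.re h.symm
      simpa [Complex.re_sum] using this
    have hsBle : sB ≤ 1 := by
      rw [hsB, ← Finset.sum_subtype (Finset.univ.filter (fun m => μ m = k)) (by simp)
        (fun m => (⟪b m, ρs.1 (b m)⟫).re), ← hsum_all]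
      exact Finset.sum_le_sum_of_subset_of_nonneg (Finset.filter_subset _ _)
        (fun m _ _ => ρs.2.2.1 _)
    have htr := trace_transfer a' b V horth κ μ ha' hb k (A k) (hA k) (Bf k) (hBf k)
      ρs.1 σ' hmatch ⟨i, rfl⟩
    rcases eq_or_lt_of_le hsBnn with hcase | hcase
    · -- sB = 0 : the trace vanishes
      have hsB0 : ∀ m : {m : Fin d // μ m = k}, (⟪b m.1, ρs.1 (b m.1)⟫).re = 0 := by
        have := (Finset.sum_eq_zero_iff_of_nonneg
          (fun m (_ : m ∈ Finset.univ) => ρs.2.2.1 (b (m : {m : Fin d // μ m = k}).1))).mp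
          (by rw [← hsB, ← hcase])
        exact fun m => this m (Finset.mem_univ m)
      have hsA0 : ∀ j : {j : Fin d // κ j = k}, (⟪a' j.1, ρs.1 (a' j.1)⟫).re = 0 := by
        have := (Finset.sum_eq_zero_iff_of_nonneg
          (fun j (_ : j ∈ Finset.univ) => ρs.2.2.1 (a' (j : {j : Fin d // κ j = k}).1))).mp
          (by rw [← hsA, hsAB, ← hcase])
        exact fun j => this j (Finset.mem_univ j)
      have hzero : LinearMap.trace ℂ H (ρs.1 ∘ₗ distOp ⇑a' ⇑b i) = 0 := by
        rw [trace_comp_distOp]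
        have hb0 : (⟪b i, ρs.1 (b i)⟫ : ℂ) = 0 := by
          rw [density_inner_re ρs.2, hsB0 ⟨i, rfl⟩, Complex.ofReal_zero]
        have ha0 : ∀ j : Fin d, (‖⟪a' j, b i⟫‖ ^ 2 : ℂ) * ⟪a' j, ρs.1 (a' j)⟫ = 0 := by
          intro j
          by_cases hj : κ j = k
          · have : (⟪a' j, ρs.1 (a' j)⟫ : ℂ) = 0 := by
              rw [density_inner_re ρs.2, hsA0 ⟨j, hj⟩, Complex.ofReal_zero]
            rw [this, mul_zero]
          · have h0 : (⟪a' j, b i⟫ : ℂ) = 0 :=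
              horth (κ j) (μ i) (fun h => hj h) (a' j) (ha' j) (b i) (hb i)
            rw [h0]
            simp
        rw [hb0, Finset.sum_congr rfl (fun j _ => ha0 j)]
        simp
      rw [hzero, norm_zero]
      exact hRHSnn
    · -- 0 < sB : normalize
      have hsBne : ((sB : ℝ) : ℂ) ≠ 0 := Complex.ofReal_ne_zero.mpr (ne_of_gt hcase)
      set σ : (V k) →ₗ[ℂ] (V k) := (((sB : ℝ) : ℂ))⁻¹ • σ' with hσdef
      have hσd : IsDensity σ := by
        refine ⟨?_, ?_, ?_⟩
        · intro x y
          rw [hσdef]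
          simp only [LinearMap.smul_apply, inner_smul_left, inner_smul_right, map_inv₀,
            Complex.conj_ofReal]
          rw [hsym x y]
        · intro x
          rw [hσdef]
          simp only [LinearMap.smul_apply, inner_smul_right, ← Complex.ofReal_inv]
          rw [Complex.re_ofReal_mul]
          have h1 : 0 ≤ (⟪x, σ' x⟫).re := by
            rw [hmatch x]
            exact ρs.2.2.1 _
          positivity
        · rw [hσdef, map_smul, smul_eq_mul, htrB, inv_mul_cancel₀ hsBne]
      have hσ'σ : σ' = ((sB : ℝ) : ℂ) • σ := by
        rw [hσdef, smul_smul, mul_inv_cancel₀ hsBne, one_smul]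
      have hnorm : ‖LinearMap.trace ℂ H (ρs.1 ∘ₗ distOp ⇑a' ⇑b i)‖
          = sB * ‖LinearMap.trace ℂ (V k) (σ ∘ₗ distOp (A k) (Bf k) ⟨i, rfl⟩)‖ := by
        rw [← htr, hσ'σ, LinearMap.smul_comp, map_smul, smul_eq_mul, norm_mul,
          Complex.norm_real, Real.norm_eq_abs, abs_of_nonneg (le_of_lt hcase)]
      have hchain : ‖LinearMap.trace ℂ (V k) (σ ∘ₗ distOp (A k) (Bf k) ⟨i, rfl⟩)‖
          ≤ ⨆ k' : Fin l, siDist (A k') (Bf k') := by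
        calc ‖LinearMap.trace ℂ (V k) (σ ∘ₗ distOp (A k) (Bf k) ⟨i, rfl⟩)‖
            ≤ sdDist (A k) (Bf k) σ := by
              unfold sdDist
              exact le_ciSup (f := fun m : {m : Fin d // μ m = k} =>
                ‖LinearMap.trace ℂ (V k) (σ ∘ₗ distOp (A k) (Bf k) m)‖)
                (Set.finite_range _).bddAbove ⟨i, rfl⟩
          _ ≤ siDist (A k) (Bf k) := le_ciSup (hbddk k) ⟨σ, hσd⟩
          _ ≤ ⨆ k' : Fin l, siDist (A k') (Bf k') :=
              le_ciSup (f := fun k' : Fin l => siDist (A k') (Bf k'))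
                (Set.finite_range _).bddAbove k
      rw [hnorm]
      calc sB * ‖LinearMap.trace ℂ (V k) (σ ∘ₗ distOp (A k) (Bf k) ⟨i, rfl⟩)‖
          ≤ ‖LinearMap.trace ℂ (V k) (σ ∘ₗ distOp (A k) (Bf k) ⟨i, rfl⟩)‖ :=
            mul_le_of_le_one_left (norm_nonneg _) hsBle
        _ ≤ ⨆ k' : Fin l, siDist (A k') (Bf k') := hchain
  · -- RHS ≤ LHS
    refine Real.iSup_le (fun k => ?_) (siDist_nonneg _ _)
    unfold siDist sdDist
    refine Real.iSup_le (fun σs => ?_) (siDist_nonneg ⇑a' ⇑b)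
    refine Real.iSup_le (fun i => ?_) (siDist_nonneg ⇑a' ⇑b)
    set ρ : H →ₗ[ℂ] H :=
      (V k).subtype ∘ₗ σs.1 ∘ₗ (orthogonalProjection (V k)).toLinearMap with hρdef
    have hproj : ∀ v : V k, orthogonalProjection (V k) (v : H) = v := fun v =>
      orthogonalProjection_mem_subspace_eq_self v
    have hmatch : ∀ v : V k, ⟪v, σs.1 v⟫ = ⟪(v : H), ρ (v : H)⟫ := by
      intro v
      have h1 : ρ (v : H) = ((σs.1 v : V k) : H) := by
        rw [hρdef]
        simp only [LinearMap.comp_apply, ContinuousLinearMap.coe_coe, hproj v,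
          Submodule.coe_subtype]
      rw [h1, ← Submodule.coe_inner]
    have hρd : IsDensity ρ := by
      refine ⟨?_, ?_, ?_⟩
      · intro x y
        calc ⟪ρ x, y⟫
            = ⟪((σs.1 (orthogonalProjection (V k) x) : V k) : H), y⟫ := rfl
          _ = ⟪σs.1 (orthogonalProjection (V k) x), orthogonalProjection (V k) y⟫ :=
              (inner_orthogonalProjection_eq_of_mem_left (K := V k) _ y).symm
          _ = ⟪orthogonalProjection (V k) x, σs.1 (orthogonalProjection (V k) y)⟫ :=
              σs.2.1 _ _
          _ = ⟪x, ((σs.1 (orthogonalProjection (V k) y) : V k) : H)⟫ :=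
              inner_orthogonalProjection_eq_of_mem_right (K := V k) _ x
          _ = ⟪x, ρ y⟫ := rfl
      · intro x
        have h1 : (⟪x, ρ x⟫ : ℂ)
            = ⟪orthogonalProjection (V k) x, σs.1 (orthogonalProjection (V k) x)⟫ :=
          (inner_orthogonalProjection_eq_of_mem_right (K := V k) _ x).symm
        rw [h1]
        exact σs.2.2.1 _
      · have h1 : LinearMap.trace ℂ H ρ
            = LinearMap.trace ℂ (V k)
              ((σs.1 ∘ₗ (orthogonalProjection (V k)).toLinearMap) ∘ₗ (V k).subtype) :=
          LinearMap.trace_comp_comm' _ _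
        have h2 : (σs.1 ∘ₗ (orthogonalProjection (V k)).toLinearMap) ∘ₗ (V k).subtype
            = σs.1 := by
          refine LinearMap.ext fun v => ?_
          simp only [LinearMap.comp_apply, ContinuousLinearMap.coe_coe, Submodule.coe_subtype,
            hproj v]
        rw [hρdef] at h1 ⊢
        rw [h1, h2, σs.2.2.2]
    have htr := trace_transfer a' b V horth κ μ ha' hb k (A k) (hA k) (Bf k) (hBf k)
      ρ σs.1 hmatch i
    rw [htr]
    have hle1 : ‖LinearMap.trace ℂ H (ρ ∘ₗ distOp ⇑a' ⇑b i.1)‖ ≤ sdDist ⇑a' ⇑b ρ := by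
      unfold sdDist
      exact le_ciSup (f := fun m : Fin d =>
        ‖LinearMap.trace ℂ H (ρ ∘ₗ distOp ⇑a' ⇑b m)‖) (Set.finite_range _).bddAbove i.1
    have hle2 : sdDist ⇑a' ⇑b ρ ≤ siDist ⇑a' ⇑b := by
      unfold siDist
      exact le_ciSup hbddH (⟨ρ, hρd⟩ : {ρ : H →ₗ[ℂ] H // IsDensity ρ})
    exact le_trans hle1 hle2

end Red


/-- reducibility of the disturbance with respect to an orthogonal direct sum
decomposition compatible with both bases. -/
theorem disturbance_reducibility {d l : ℕ} (hd : 2 ≤ d) (hl : 1 ≤ l)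
    (a' b : OrthonormalBasis (Fin d) ℂ H)
    (V : Fin l → Submodule ℂ H) (hV : ∀ k, V k ≠ ⊥)
    (horth : ∀ k k', k ≠ k' → ∀ x ∈ V k, ∀ y ∈ V k', ⟪x, y⟫ = 0)
    (hsum : iSup V = ⊤)
    (κ μ : Fin d → Fin l)
    (ha' : ∀ j, a' j ∈ V (κ j)) (hb : ∀ i, b i ∈ V (μ i)) :
    (∀ k : Fin l,
      (∃ B' : OrthonormalBasis {j : Fin d // κ j = k} ℂ (V k), ∀ j, (B' j : H) = a' j.1) ∧
      (∃ B : OrthonormalBasis {i : Fin d // μ i = k} ℂ (V k), ∀ i, (B i : H) = b i.1)) ∧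
    siDist (⇑a') (⇑b) = ⨆ k : Fin l,
      siDist (fun j : {j : Fin d // κ j = k} => (⟨a' j.1, by have h := ha' j.1; rwa [j.2] at h⟩ : V k))
             (fun i : {i : Fin d // μ i = k} => (⟨b i.1, by have h := hb i.1; rwa [i.2] at h⟩ : V k)) := by
  refine ⟨fun k => ⟨Red.onb_restrict a' V horth κ ha' k, Red.onb_restrict b V horth μ hb k⟩, ?_⟩
  exact Red.siDist_reduce hd hl a' b V hV horth κ μ ha' hb _ (fun k j => rfl) _ (fun k i => rfl)
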